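/- Let F be a finite field. There exist vectors g0, g1 ∈ F² with all four entries g0,1, g0,2, g1,1, g1,2 nonzero and g1,1·g0,2 − g1,2·g0,1 ≠ 0 if and only if |F| ≥ 3. -/
import Mathlib


/-- Let F be a finite field. There exist vectors g0, g1 ∈ F² with all
four entries nonzero and g1,1·g0,2 − g1,2·g0,1 ≠ 0 if and only if |F| ≥ 3. -/
theorem stmt1 (F : Type*) [Field F] [Fintype F] :
    (∃ g0 g1 : F × F, g0.1 ≠ 0 ∧ g0.2 ≠ 0 ∧ g1.1 ≠ 0 ∧ g1.2 ≠ 0 ∧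
      g1.1 * g0.2 - g1.2 * g0.1 ≠ 0) ↔ 3 ≤ Fintype.card F := by
  classical
  constructor
  · rintro ⟨g0, g1, h01, h02, h11, h12, hdet⟩
    by_contra hlt
    push_neg at hlt
    have h2 : Fintype.card F = 2 := le_antisymm (by omega) Fintype.one_lt_card
    -- all nonzero elements equal 1
    have hone : ∀ x : F, x ≠ 0 → x = 1 := by
      intro x hx
      have hu : Fintype.card Fˣ = 1 := by
        rw [Fintype.card_units, h2]
      have := Fintype.card_le_one_iff.mp (le_of_eq hu)
      have := this (Units.mk0 x hx) 1
      simpa using congrArg Units.val this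
    rw [hone _ h01, hone _ h02, hone _ h11, hone _ h12] at hdet
    simp at hdet
  · intro h
    obtain ⟨a, ha0, ha1⟩ : ∃ a : F, a ≠ 0 ∧ a ≠ 1 := by
      by_contra hc
      push_neg at hc
      have : (Finset.univ : Finset F) ⊆ {0, 1} := by
        intro x _
        rcases eq_or_ne x 0 with h0 | h0
        · simp [h0]
        · simp [hc x h0]
      have := Finset.card_le_card this
      have h01 : ({0, 1} : Finset F).card ≤ 2 :=
        (Finset.card_insert_le _ _).trans (by simp)
      rw [Finset.card_univ] at this
      omega
    refine ⟨(1, 1), (1, a), one_ne_zero, one_ne_zero, one_ne_zero, ha0, ?_⟩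
    simpa using sub_ne_zero_of_ne (fun h => ha1 h.symm)
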